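/- For every κ > 1 and every q with p − 1 < q < p (where p > 1), there exists a constant C = C(κ, q) > 0 such that |a + b|^p ≤ κ·|a|^p + |b|^p + C·|a|^{p−q}·|b|^q for all real a, b. -/

import Mathlib

lemma aux_conv (p : ℝ) (hp : 1 < p) (s : ℝ) (h0 : 0 ≤ s) (h1 : s ≤ 1) :
    (1 + s) ^ p ≤ 1 + (2 ^ p - 1) * s := by
  have hc := convexOn_rpow hp.le
  have h := hc.2 (show (1:ℝ) ∈ Set.Ici 0 by norm_num)
    (show (2:ℝ) ∈ Set.Ici 0 by norm_num)
    (show (0:ℝ) ≤ 1 - s by linarith) h0 (by ring)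
  simp only [smul_eq_mul, mul_one] at h
  rw [show (1 - s + s * 2) = 1 + s by ring, Real.one_rpow] at h
  nlinarith [h]

lemma aux_key (p κ q C M : ℝ) (hp : 1 < p) (hκ : 1 < κ) (hq1 : p - 1 < q) (hq2 : q < p)
    (hM1 : 1 ≤ M) (hM2 : (2 ^ p - 1) / (κ - 1) ≤ M)
    (hC1 : 2 ^ p - 1 ≤ C) (hC2 : (2 ^ p - 1) * M ^ (p - 1) ≤ C)
    (t : ℝ) (ht : 0 ≤ t) :
    (t + 1) ^ p ≤ κ * t ^ p + 1 + C * t ^ (p - q) := by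
  have h2p : (2:ℝ) ≤ 2 ^ p := by
    calc (2:ℝ) = 2 ^ (1:ℝ) := (Real.rpow_one 2).symm
    _ ≤ 2 ^ p := Real.rpow_le_rpow_of_exponent_le one_le_two hp.le
  have htp : (0:ℝ) ≤ t ^ p := Real.rpow_nonneg ht p
  have htpq : (0:ℝ) ≤ t ^ (p - q) := Real.rpow_nonneg ht (p - q)
  rcases le_or_gt t 1 with h1 | h1
  · -- small t
    have hconv := aux_conv p hp t ht h1
    have hmono : t ≤ t ^ (p - q) := by
      rcases eq_or_lt_of_le ht with h0 | h0
      · rw [← h0, Real.zero_rpow (by linarith : p - q ≠ 0)]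
      · calc t = t ^ (1:ℝ) := (Real.rpow_one t).symm
        _ ≤ t ^ (p - q) := Real.rpow_le_rpow_of_exponent_ge h0 h1 (by linarith)
    rw [add_comm t 1]
    have : (2 ^ p - 1) * t ≤ C * t ^ (p - q) := by nlinarith
    nlinarith
  · -- large t
    have ht0 : 0 < t := by linarith
    have hs0 : (0:ℝ) ≤ 1 / t := by positivity
    have hs1 : 1 / t ≤ 1 := by rw [div_le_one ht0]; linarith
    have hconv := aux_conv p hp (1 / t) hs0 hs1
    have e0 : t * (1 + 1 / t) = t + 1 := by field_simp
    have e1 : (t + 1) ^ p = t ^ p * (1 + 1 / t) ^ p := by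
      rw [← e0, Real.mul_rpow ht0.le (by positivity)]
    have e2 : t ^ p * (1 / t) = t ^ (p - 1) := by
      rw [show p = (p - 1) + 1 by ring, Real.rpow_add ht0, Real.rpow_one]
      field_simp
      ring_nf
    have h3 : (t + 1) ^ p ≤ t ^ p + (2 ^ p - 1) * t ^ (p - 1) := by
      calc (t + 1) ^ p = t ^ p * (1 + 1 / t) ^ p := e1
      _ ≤ t ^ p * (1 + (2 ^ p - 1) * (1 / t)) := by
          exact mul_le_mul_of_nonneg_left hconv htp
      _ = t ^ p + (2 ^ p - 1) * (t ^ p * (1 / t)) := by ring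
      _ = t ^ p + (2 ^ p - 1) * t ^ (p - 1) := by rw [e2]
    have htp1 : (0:ℝ) ≤ t ^ (p - 1) := Real.rpow_nonneg ht (p - 1)
    have key2 : (2 ^ p - 1) * t ^ (p - 1) ≤ (κ - 1) * t ^ p + C * t ^ (p - q) := by
      rcases le_or_gt t M with hM | hM
      · have hA : t ^ (p - 1) ≤ M ^ (p - 1) :=
          Real.rpow_le_rpow ht hM (by linarith)
        have hB : (1:ℝ) ≤ t ^ (p - q) := by
          calc (1:ℝ) = 1 ^ (p - q) := (Real.one_rpow _).symm
          _ ≤ t ^ (p - q) := Real.rpow_le_rpow zero_le_one h1.le (by linarith)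
        have hCpos : 0 < C := by nlinarith
        nlinarith
      · have : 2 ^ p - 1 ≤ (κ - 1) * t := by
          rw [div_le_iff₀ (by linarith : (0:ℝ) < κ - 1)] at hM2
          nlinarith
        have e3 : t * t ^ (p - 1) = t ^ p := by
          nth_rewrite 1 [← Real.rpow_one t]
          rw [← Real.rpow_add ht0]
          norm_num
        have hCpos : 0 < C := by nlinarith
        nlinarith [mul_le_mul_of_nonneg_right this htp1]
    linarith

theorem stmt_1 (p κ q : ℝ) (hp : 1 < p) (hκ : 1 < κ) (hq1 : p - 1 < q) (hq2 : q < p) :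
    ∃ C > 0, ∀ a b : ℝ,
      |a + b| ^ p ≤ κ * |a| ^ p + |b| ^ p + C * |a| ^ (p - q) * |b| ^ q := by
  have h2p : (2:ℝ) ≤ 2 ^ p := by
    calc (2:ℝ) = 2 ^ (1:ℝ) := (Real.rpow_one 2).symm
    _ ≤ 2 ^ p := Real.rpow_le_rpow_of_exponent_le one_le_two hp.le
  set M : ℝ := max 1 ((2 ^ p - 1) / (κ - 1)) with hMdef
  have hM1 : 1 ≤ M := le_max_left _ _
  have hM2 : (2 ^ p - 1) / (κ - 1) ≤ M := le_max_right _ _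
  have hMp : (1:ℝ) ≤ M ^ (p - 1) := by
    calc (1:ℝ) = 1 ^ (p - 1) := (Real.one_rpow _).symm
    _ ≤ M ^ (p - 1) := Real.rpow_le_rpow zero_le_one hM1 (by linarith)
  set C : ℝ := (2 ^ p - 1) * M ^ (p - 1) with hCdef
  have hC1 : 2 ^ p - 1 ≤ C := by nlinarith
  have hC2 : (2 ^ p - 1) * M ^ (p - 1) ≤ C := le_refl _
  have hCpos : 0 < C := by nlinarith
  refine ⟨C, hCpos, fun a b => ?_⟩
  set x : ℝ := |a| with hxdef
  set y : ℝ := |b| with hydef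
  have hx : 0 ≤ x := abs_nonneg a
  have hy : 0 ≤ y := abs_nonneg b
  have step0 : |a + b| ^ p ≤ (x + y) ^ p :=
    Real.rpow_le_rpow (abs_nonneg _) (abs_add_le a b) (by linarith)
  have hq0 : 0 < q := by nlinarith
  rcases eq_or_lt_of_le hy with hy0 | hy0
  · -- y = 0
    have hb0 : b = 0 := abs_eq_zero.mp hy0.symm
    subst hb0
    rw [← hy0, Real.zero_rpow (ne_of_gt hq0), Real.zero_rpow (by positivity : p ≠ 0)]
    have hxp : (0:ℝ) ≤ x ^ p := Real.rpow_nonneg hx p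
    have : |a + 0| = x := by rw [add_zero]
    rw [this]
    nlinarith [Real.rpow_nonneg hx (p - q)]
  · -- y > 0
    have hyne : y ≠ 0 := ne_of_gt hy0
    have ht : 0 ≤ x / y := by positivity
    have key := aux_key p κ q C M hp hκ hq1 hq2 hM1 hM2 hC1 hC2 (x / y) ht
    have hyp : (0:ℝ) < y ^ p := Real.rpow_pos_of_pos hy0 p
    have e1 : (x / y + 1) ^ p * y ^ p = (x + y) ^ p := by
      rw [← Real.mul_rpow (by positivity) hy0.le]
      congr 1
      field_simp
    have e2 : (x / y) ^ p * y ^ p = x ^ p := by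
      rw [← Real.mul_rpow ht hy0.le]
      congr 1
      field_simp
    have e3 : (x / y) ^ (p - q) * y ^ p = x ^ (p - q) * y ^ q := by
      have hyq : y ^ p = y ^ (p - q) * y ^ q := by
        rw [← Real.rpow_add hy0]; ring_nf
      rw [hyq, ← mul_assoc, ← Real.mul_rpow ht hy0.le]
      congr 2
      field_simp
    have H := mul_le_mul_of_nonneg_right key hyp.le
    rw [add_mul, add_mul, mul_assoc κ, mul_assoc C, one_mul, e1, e2, e3] at H
    calc |a + b| ^ p ≤ (x + y) ^ p := step0
    _ ≤ κ * x ^ p + y ^ p + C * (x ^ (p - q) * y ^ q) := H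
    _ = κ * x ^ p + y ^ p + C * x ^ (p - q) * y ^ q := by ring
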